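/- For every well-structured MAP instance G there exists a minimum-cost 2-edge cover D̂2 of G (of cost τ(G)) such that every pendant 2ec-block of D̂2 that is incident to a zero-bridge of D̂2 has cost at least 3. -/
import Mathlib


set_option autoImplicit false

/-!  A formal framework for the Matching Augmentation Problem (MAP):
loopless multigraphs with edge costs in `{0,1}` (given by the predicate
`isZero` marking the zero-edges). -/

/-- A finite loopless multigraph together with `{0,1}` edge costs:
`isZero e` means that the edge `e` has cost zero (otherwise it is a unit-edge). -/
structure CostGraph where
  V : Type
  E : Type
  finV : Finite V
  finE : Finite E
  ends : E → Sym2 V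
  loopless : ∀ e, ¬ (ends e).IsDiag
  isZero : E → Prop

namespace CostGraph

variable (G : CostGraph)

/-- `x` and `y` are joined by an edge of `F` and both lie in the node set `S`. -/
def Adj (S : Set G.V) (F : Set G.E) (x y : G.V) : Prop :=
  x ∈ S ∧ y ∈ S ∧ ∃ e ∈ F, G.ends e = s(x, y)

/-- Reachability in the sub-multigraph with node set `S` and edge set `F`. -/
def Reachable (S : Set G.V) (F : Set G.E) (x y : G.V) : Prop :=
  Relation.ReflTransGen (G.Adj S F) x y

/-- The sub-multigraph with node set `S` and those edges of `F` having both
end nodes in `S` is connected (in particular `S` is nonempty). -/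
def ConnectedOn (S : Set G.V) (F : Set G.E) : Prop :=
  S.Nonempty ∧ ∀ x ∈ S, ∀ y ∈ S, G.Reachable S F x y

/-- The sub-multigraph with node set `S` and edge set `F` is 2-edge-connected:
it has at least two nodes and removing any one edge leaves it connected. -/
def TwoECOn (S : Set G.V) (F : Set G.E) : Prop :=
  1 < S.ncard ∧ G.ConnectedOn S F ∧ ∀ e : G.E, G.ConnectedOn S (F \ {e})

/-- `F` is the edge set of a 2-edge-connected spanning subgraph (2-ECSS) of `G`. -/
def TwoEC (F : Set G.E) : Prop := G.TwoECOn Set.univ F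

/-- The cost of a set of edges: the number of unit-edges in it. -/
noncomputable def cost (F : Set G.E) : ℕ := {e ∈ F | ¬ G.isZero e}.ncard

/-- `opt G` is the minimum cost of a 2-ECSS of `G`. -/
noncomputable def opt : ℕ := sInf (G.cost '' {F | G.TwoEC F})

/-- `F` is a 2-edge cover: every node is incident to at least two edges of `F`. -/
def TwoEdgeCover (F : Set G.E) : Prop :=
  ∀ v : G.V, 2 ≤ {e ∈ F | v ∈ G.ends e}.ncard

/-- `tau G` is the minimum cost of a 2-edge cover of `G`. -/
noncomputable def tau : ℕ := sInf (G.cost '' {F | G.TwoEdgeCover F})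

/-- The zero-edges form a matching: no two distinct zero-edges share an end node. -/
def ZeroMatching : Prop :=
  ∀ e f : G.E, G.isZero e → G.isZero f → e ≠ f → ∀ x : G.V, x ∈ G.ends e → x ∉ G.ends f

/-- A MAP instance: a (finite, loopless) multigraph with `{0,1}` edge costs whose
zero-edges form a matching and which is 2-edge-connected. -/
def IsMAP : Prop := G.ZeroMatching ∧ G.TwoEC Set.univ

/-- The degree of a node: the number of edges incident to it. -/
noncomputable def degree (v : G.V) : ℕ := {e : G.E | v ∈ G.ends e}.ncard

/-- `e, f` form a `{0,1}`-edge-pair: parallel edges, `e` of cost zero, `f` of cost one. -/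
def IsZeroOnePair (e f : G.E) : Prop :=
  e ≠ f ∧ G.ends e = G.ends f ∧ G.isZero e ∧ ¬ G.isZero f

/-- `G` has no `{0,1}`-edge-pairs. -/
def NoZeroOnePair : Prop := ∀ e f, ¬ G.IsZeroOnePair e f

/-- `v` is a cut node: deleting `v` leaves a disconnected (or empty) graph. -/
def IsCutNode (v : G.V) : Prop := ¬ G.ConnectedOn ({v}ᶜ) Set.univ

/-- `{v, w}` is a bad-pair: `vw` is a zero-edge and deleting both `v` and `w`
disconnects the graph. -/
def IsBadPair (v w : G.V) : Prop :=
  (∃ e, G.isZero e ∧ G.ends e = s(v, w)) ∧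
    ¬ G.ConnectedOn (({v, w} : Set G.V)ᶜ) Set.univ

/-- The number of bad-pairs of `G` (counted as unordered pairs). -/
noncomputable def badPairCount : ℕ :=
  {z : Sym2 G.V | ∃ a b, z = s(a, b) ∧ G.IsBadPair a b}.ncard

/-- `C` is (the node set of) a connected component of the sub-multigraph with node
set `S` and edge set `F`. -/
def IsCompOf (S : Set G.V) (F : Set G.E) (C : Set G.V) : Prop :=
  C ⊆ S ∧ C.Nonempty ∧ G.ConnectedOn C F ∧
    ∀ x ∈ C, ∀ y ∈ S, G.Adj S F x y → y ∈ C

/-- `Q` is the node set of a redundant 4-cycle: a 4-cycle `u₁u₂u₃u₄` with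
`V(C) ≠ V(G)`, two non-adjacent edges of cost zero and two non-adjacent nodes
of degree two in `G`. -/
def IsRed4CycleOn (Q : Set G.V) : Prop :=
  ∃ (u₁ u₂ u₃ u₄ : G.V) (e₁ e₂ e₃ e₄ : G.E),
    Q = {u₁, u₂, u₃, u₄} ∧
    u₁ ≠ u₂ ∧ u₁ ≠ u₃ ∧ u₁ ≠ u₄ ∧ u₂ ≠ u₃ ∧ u₂ ≠ u₄ ∧ u₃ ≠ u₄ ∧
    e₁ ≠ e₂ ∧ e₁ ≠ e₃ ∧ e₁ ≠ e₄ ∧ e₂ ≠ e₃ ∧ e₂ ≠ e₄ ∧ e₃ ≠ e₄ ∧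
    G.ends e₁ = s(u₁, u₂) ∧ G.ends e₂ = s(u₂, u₃) ∧
    G.ends e₃ = s(u₃, u₄) ∧ G.ends e₄ = s(u₄, u₁) ∧
    G.isZero e₁ ∧ G.isZero e₃ ∧
    G.degree u₂ = 2 ∧ G.degree u₄ = 2 ∧
    Q ≠ Set.univ

/-- A well-structured MAP instance: no `{0,1}`-edge-pairs, no redundant 4-cycles,
no cut nodes and no bad-pairs. -/
def WellStructured : Prop :=
  G.IsMAP ∧ G.NoZeroOnePair ∧ (∀ Q, ¬ G.IsRed4CycleOn Q) ∧
    (∀ v, ¬ G.IsCutNode v) ∧ (∀ v w, ¬ G.IsBadPair v w)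

/-- `G` is 2-node-connected: more than two nodes and deleting any one node
leaves a connected graph. -/
def TwoNC : Prop :=
  2 < Nat.card G.V ∧ ∀ v : G.V, G.ConnectedOn ({v}ᶜ) Set.univ

/-- Bridge of the sub-multigraph with node set `S` and edge set `F`: an edge of `F`
inside `S` whose removal disconnects its end nodes. -/
def IsBridgeOn (S : Set G.V) (F : Set G.E) (e : G.E) : Prop :=
  e ∈ F ∧ (∀ x ∈ G.ends e, x ∈ S) ∧
    ∀ x y, G.ends e = s(x, y) → ¬ G.Reachable S (F \ {e}) x y

/-- Bridge of the spanning subgraph `(V, F)`. -/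
def IsBridge (F : Set G.E) (e : G.E) : Prop := G.IsBridgeOn Set.univ F e

/-- `B` is (the node set of) a 2ec-block of the spanning subgraph `(V, F)`:
a maximal connected bridgeless subgraph with at least two nodes, equivalently a
connected component with at least two nodes of the graph obtained by deleting
all bridges. -/
def IsTwoECBlock (F : Set G.E) (B : Set G.V) : Prop :=
  G.IsCompOf Set.univ (F \ {e | G.IsBridge F e}) B ∧ 2 ≤ B.ncard

/-- Delete a set `D` of edges. -/
noncomputable def deleteEdges (D : Set G.E) : CostGraph where
  V := G.V
  E := {e : G.E // e ∉ D}
  finV := G.finV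
  finE := by haveI := G.finE; exact Subtype.finite
  ends e := G.ends e.1
  loopless e := G.loopless e.1
  isZero e := G.isZero e.1

/-- The sub-instance induced on a set `S` of nodes. -/
noncomputable def induce (S : Set G.V) : CostGraph where
  V := ↥S
  E := {e : G.E // ∀ x ∈ G.ends e, x ∈ S}
  finV := by haveI := G.finV; exact Subtype.finite
  finE := by haveI := G.finE; exact Subtype.finite
  ends e := (G.ends e.1).pmap Subtype.mk e.2
  loopless e := by
    intro hd
    exact G.loopless e.1
      (by simpa [Sym2.pmap_subtype_map_subtypeVal] using hd.map (f := Subtype.val))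
  isZero e := G.isZero e.1

/-- Contraction of `G` along (the equivalence generated by) a relation `R`:
node classes are identified, and edges joining identified nodes are removed
(no loops are created). -/
noncomputable def contract (R : G.V → G.V → Prop) : CostGraph where
  V := Quotient (Relation.EqvGen.setoid R)
  E := {e : G.E // ¬ (Sym2.map (Quotient.mk (Relation.EqvGen.setoid R)) (G.ends e)).IsDiag}
  finV := by haveI := G.finV; exact Quotient.finite _
  finE := by haveI := G.finE; exact Subtype.finite
  ends e := Sym2.map (Quotient.mk (Relation.EqvGen.setoid R)) (G.ends e.1)
  loopless e := e.2
  isZero e := G.isZero e.1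

/-- The relation identifying the nodes of each redundant 4-cycle. -/
def red4Rel (x y : G.V) : Prop := ∃ Q, G.IsRed4CycleOn Q ∧ x ∈ Q ∧ y ∈ Q

/-- The multigraph obtained from `G` by contracting all redundant 4-cycles. -/
noncomputable def contractRed4 : CostGraph := G.contract G.red4Rel

/-- For a bad-pair `{v,w}` and a bp-component `C`: the sub-instance `C^{v,w}`
induced on `V(C) ∪ {v, w}`. -/
noncomputable def bpUp (v w : G.V) (C : Set G.V) : CostGraph :=
  G.induce (C ∪ {v, w})

/-- For a bad-pair `{v,w}` and a bp-component `C`: the instance `C^⊘`, obtained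
from `C^{v,w}` by contracting the zero-edge `vw` if `C` has at least two nodes,
and equal to `C^{v,w}` if `C` has exactly one node. -/
noncomputable def bpContr (v w : G.V) (C : Set G.V) : CostGraph :=
  if 2 ≤ C.ncard then
    (G.bpUp v w C).contract (fun x y => x.1 = v ∧ y.1 = w)
  else G.bpUp v w C

/-- Every edge of `C^⊘` is an edge of `G`. -/
noncomputable def bpContrEdge (v w : G.V) (C : Set G.V) :
    (G.bpContr v w C).E → G.E := by
  unfold bpContr
  by_cases h : 2 ≤ C.ncard
  · rw [if_pos h]; exact fun e => e.1.1
  · rw [if_neg h]; exact fun e => e.1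

/-- The sub-multigraph `(S, F)` is 2-node-connected. -/
def TwoNCOn (S : Set G.V) (F : Set G.E) : Prop :=
  2 < S.ncard ∧ ∀ v : G.V, G.ConnectedOn (S \ {v}) F

/-- The sub-multigraph `(S, F)` consists of two nodes joined by two parallel edges. -/
def IsParallelPairBlock (S : Set G.V) (F : Set G.E) : Prop :=
  S.ncard = 2 ∧ ∃ e f, e ≠ f ∧ G.ends e = G.ends f ∧ F = {e, f}

/-- `(B i, F i)` (for `i : Fin k`) are the blocks of `G`: each block is 2-node-connected
or a pair of nodes joined by two parallel edges, the edge set of `G` is partitioned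
among the blocks, each `B i` is the set of end nodes of the edges of `F i`, and any
two blocks share at most one node. -/
def IsBlockDecomp {k : ℕ} (B : Fin k → Set G.V) (F : Fin k → Set G.E) : Prop :=
  (∀ i, ∀ e ∈ F i, ∀ x ∈ G.ends e, x ∈ B i) ∧
  (∀ i, B i = {x | ∃ e ∈ F i, x ∈ G.ends e}) ∧
  (Set.univ : Set G.E) = ⋃ i, F i ∧
  (∀ i j, i ≠ j → Disjoint (F i) (F j)) ∧
  (∀ i j, i ≠ j → (B i ∩ B j).ncard ≤ 1) ∧
  (∀ i, G.TwoNCOn (B i) (F i) ∨ G.IsParallelPairBlock (B i) (F i))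

end CostGraph

/-- `TauHatRel G t` holds when `t` is a value of `τ̂` for `G`, i.e. a value obtainable
by the following recursion: if `G` has no redundant 4-cycles and no cut nodes
(so it is well-structured provided it has no `{0,1}`-edge-pairs and no bad-pairs)
then `τ̂(G) = τ(G)`; otherwise contract all (`q`, say) redundant 4-cycles of `G`,
split the resulting graph at its cut nodes into its blocks `G₁, …, G_k`, and set
`τ̂(G) = 2q + τ̂(G₁) + … + τ̂(G_k)`. -/
inductive TauHatRel : CostGraph → ℕ → Prop where
  | base (G : CostGraph)
      (h4 : ∀ Q, ¬ G.IsRed4CycleOn Q) (hc : ∀ v, ¬ G.IsCutNode v) :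
      TauHatRel G G.tau
  | step (G : CostGraph) (k : ℕ)
      (B : Fin k → Set G.contractRed4.V) (F : Fin k → Set G.contractRed4.E)
      (t : Fin k → ℕ)
      (hobstr : (∃ Q, G.IsRed4CycleOn Q) ∨ (∃ v, G.IsCutNode v))
      (hdec : G.contractRed4.IsBlockDecomp B F)
      (ht : ∀ i, TauHatRel (G.contractRed4.induce (B i)) (t i)) :
      TauHatRel G (2 * {Q | G.IsRed4CycleOn Q}.ncard + ∑ i, t i)

namespace CostGraph

/-- `τ̂(G)`: the value associated to `G` by the recursion of `TauHatRel`. -/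
noncomputable def tauHat (G : CostGraph) : ℕ := sInf {t | TauHatRel G t}

open Classical in
/-- The lower bound `lb(G)`: `τ̂(G)` if `G` has no `{0,1}`-edge-pairs, no cut nodes
and no bad-pairs, and `opt(G)` otherwise. -/
noncomputable def lb (G : CostGraph) : ℕ :=
  if G.NoZeroOnePair ∧ (∀ v, ¬ G.IsCutNode v) ∧ (∀ v w, ¬ G.IsBadPair v w)
  then G.tauHat else G.opt

end CostGraph

namespace CostGraph

variable {G : CostGraph}

lemma Adj.symm' {S : Set G.V} {F : Set G.E} {x y : G.V} (h : G.Adj S F x y) :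
    G.Adj S F y x := by
  obtain ⟨hx, hy, e, he, hee⟩ := h
  exact ⟨hy, hx, e, he, hee.trans (Sym2.eq_swap)⟩

lemma Reachable.symm' {S : Set G.V} {F : Set G.E} {x y : G.V} (h : G.Reachable S F x y) :
    G.Reachable S F y x := by
  induction h with
  | refl => exact Relation.ReflTransGen.refl
  | tail _ hbc ih => exact (Relation.ReflTransGen.single hbc.symm').trans ih

lemma Reachable.lift {S S' : Set G.V} {F F' : Set G.E}
    (hcov : ∀ a b, G.Adj S F a b → G.Reachable S' F' a b) {x y : G.V}
    (h : G.Reachable S F x y) : G.Reachable S' F' x y := by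
  induction h with
  | refl => exact Relation.ReflTransGen.refl
  | tail _ hbc ih => exact ih.trans (hcov _ _ hbc)

lemma Reachable.mono {S S' : Set G.V} {F F' : Set G.E} (hS : S ⊆ S') (hF : F ⊆ F')
    {x y : G.V} (h : G.Reachable S F x y) : G.Reachable S' F' x y :=
  h.lift (fun a b ⟨ha, hb, e, he, hee⟩ =>
    Relation.ReflTransGen.single ⟨hS ha, hS hb, e, hF he, hee⟩)

lemma exists_crossing {S : Set G.V} {F : Set G.E} {T : Set G.V} {p q : G.V}
    (h : G.Reachable S F p q) : p ∈ T → q ∉ T →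
    ∃ x ∈ T, ∃ y, y ∉ T ∧ G.Adj S F x y := by
  induction h with
  | refl => exact fun hp hq => absurd hp hq
  | @tail b c _ hbc ih =>
    intro hp hq
    by_cases hb : b ∈ T
    · exact ⟨b, hb, c, hq, hbc⟩
    · exact ih hp hb

lemma sym2_eq_of_mem {a b : G.V} {z : Sym2 G.V} (ha : a ∈ z) (hb : b ∈ z) (hne : a ≠ b) :
    z = s(a, b) := by
  obtain ⟨c, rfl⟩ := Sym2.mem_iff_exists.1 ha
  rcases Sym2.mem_iff.1 hb with h | h
  · exact absurd h.symm hne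
  · rw [h]

lemma not_isBridge_of_reach {F : Set G.E} {e : G.E} {a b : G.V}
    (hab : G.ends e = s(a, b)) (h : G.Reachable Set.univ (F \ {e}) a b) :
    ¬ G.IsBridge F e := fun hbr => hbr.2.2 a b hab h

lemma reach_of_not_isBridge {F : Set G.E} {e : G.E} (heF : e ∈ F)
    (h : ¬ G.IsBridge F e) {a b : G.V} (hab : G.ends e = s(a, b)) :
    G.Reachable Set.univ (F \ {e}) a b := by
  unfold IsBridge IsBridgeOn at h
  push_neg at h
  obtain ⟨x, y, hxy, hr⟩ := h heF (fun x _ => Set.mem_univ x)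
  rw [hab] at hxy
  rcases Sym2.eq_iff.1 hxy with ⟨rfl, rfl⟩ | ⟨rfl, rfl⟩
  · exact hr
  · exact hr.symm'

/-- Projection of a walk into a "one-door" set `B`: if the only edges of `F₁`
crossing the boundary of `B` leave through `u`, then walks can be projected to
walks inside `B` using only internal edges. -/
lemma project_in {B : Set G.V} {u v : G.V} {F₁ : Set G.E}
    (hdoor : ∀ e ∈ F₁, ∀ c d, G.ends e = s(c, d) → c ∈ B → d ∉ B → c = u ∧ d = v)
    {p q : G.V} (h : G.Reachable Set.univ F₁ p q) (hp : p ∈ B) :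
    (q ∈ B → G.Reachable B {e ∈ F₁ | ∀ z ∈ G.ends e, z ∈ B} p q) ∧
      (q ∉ B → G.Reachable B {e ∈ F₁ | ∀ z ∈ G.ends e, z ∈ B} p u) := by
  induction h with
  | refl => exact ⟨fun _ => Relation.ReflTransGen.refl, fun hq => absurd hp hq⟩
  | @tail b c _ hbc ih =>
    obtain ⟨_, _, e, heF, hee⟩ := hbc
    by_cases hb : b ∈ B <;> by_cases hc : c ∈ B
    · refine ⟨fun _ => (ih.1 hb).tail ⟨hb, hc, e, ⟨heF, ?_⟩, hee⟩, fun h' => absurd hc h'⟩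
      intro z hz
      rw [hee] at hz
      rcases Sym2.mem_iff.1 hz with rfl | rfl
      · exact hb
      · exact hc
    · obtain ⟨hbu, _⟩ := hdoor e heF b c hee hb hc
      exact ⟨fun h' => absurd h' hc, fun _ => hbu ▸ ih.1 hb⟩
    · obtain ⟨hcu, _⟩ := hdoor e heF c b (hee.trans Sym2.eq_swap) hc hb
      exact ⟨fun _ => hcu ▸ ih.2 hb, fun h' => absurd hc h'⟩
    · exact ⟨fun h' => absurd h' hc, fun _ => ih.2 hb⟩

/-- Projection of a walk to the outside of a "one-door" set `B`. -/
lemma project_out {B : Set G.V} {u v : G.V} {F₁ : Set G.E}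
    (hdoor : ∀ e ∈ F₁, ∀ c d, G.ends e = s(c, d) → c ∈ B → d ∉ B → c = u ∧ d = v)
    {p q : G.V} (h : G.Reachable Set.univ F₁ p q) (hp : p ∉ B) :
    (q ∉ B → G.Reachable Bᶜ {e ∈ F₁ | ∀ z ∈ G.ends e, z ∉ B} p q) ∧
      (q ∈ B → G.Reachable Bᶜ {e ∈ F₁ | ∀ z ∈ G.ends e, z ∉ B} p v) := by
  induction h with
  | refl => exact ⟨fun _ => Relation.ReflTransGen.refl, fun hq => absurd hq hp⟩
  | @tail b c _ hbc ih =>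
    obtain ⟨_, _, e, heF, hee⟩ := hbc
    by_cases hb : b ∈ B <;> by_cases hc : c ∈ B
    · exact ⟨fun h' => absurd hc h', fun _ => ih.2 hb⟩
    · obtain ⟨_, hcv⟩ := hdoor e heF b c hee hb hc
      exact ⟨fun _ => hcv ▸ ih.2 hb, fun h' => absurd h' hc⟩
    · obtain ⟨_, hbv⟩ := hdoor e heF c b (hee.trans Sym2.eq_swap) hc hb
      exact ⟨fun h' => absurd hc h', fun _ => hbv ▸ ih.1 hb⟩
    · refine ⟨fun _ => (ih.1 hb).tail ⟨hb, hc, e, ⟨heF, ?_⟩, hee⟩, fun h' => absurd h' hc⟩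
      intro z hz
      rw [hee] at hz
      rcases Sym2.mem_iff.1 hz with rfl | rfl
      · exact hb
      · exact hc

end CostGraph

/-- For every well-structured MAP instance `G` there exists a
minimum-cost 2-edge cover `D̂2` of `G` (of cost `τ(G)`) such that every pendant
2ec-block of `D̂2` that is incident to a zero-bridge of `D̂2` has cost at least 3. -/
theorem exists_postprocessed_D2 (G : CostGraph) (hG : G.WellStructured) :
    ∃ F : Set G.E, G.TwoEdgeCover F ∧ G.cost F = G.tau ∧
      ∀ B : Set G.V, G.IsTwoECBlock F B →
        {e | G.IsBridge F e ∧ ∃ x ∈ G.ends e, x ∈ B}.ncard = 1 →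
        (∃ e, G.IsBridge F e ∧ (∃ x ∈ G.ends e, x ∈ B) ∧ G.isZero e) →
        3 ≤ G.cost {e ∈ F | ∀ x ∈ G.ends e, x ∈ B} := by
  classical
  haveI := G.finV
  haveI := G.finE
  obtain ⟨⟨hmatch, htwoec⟩, hnpair, hn4, hncut, hnbad⟩ := hG
  obtain ⟨hVcard, hconnU, hconnDel⟩ := htwoec
  have two_memE : ∀ (s : Set G.E) (a b : G.E), a ∈ s → b ∈ s → a ≠ b → 2 ≤ s.ncard :=
    fun s a b ha hb hab => (Set.one_lt_ncard (Set.toFinite s)).2 ⟨a, ha, b, hb, hab⟩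
  have ends_rep : ∀ e : G.E, ∃ c d, G.ends e = s(c, d) := by
    intro e
    induction G.ends e using Sym2.ind with
    | _ c d => exact ⟨c, d, rfl⟩
  -- `Set.univ` is a 2-edge cover
  have hcovU : G.TwoEdgeCover Set.univ := by
    intro w
    obtain ⟨a, -, b, -, hab⟩ := (Set.one_lt_ncard (Set.toFinite _)).1 hVcard
    have hq : ∃ q : G.V, q ≠ w := by
      by_cases h : a = w
      · exact ⟨b, fun hb => hab (h.trans hb.symm)⟩
      · exact ⟨a, h⟩
    obtain ⟨q, hqw⟩ := hq
    obtain ⟨z, hz, -⟩ :=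
      (hconnU.2 w trivial q trivial).cases_head.resolve_left (fun h => hqw h.symm)
    obtain ⟨-, -, e₁, -, he₁⟩ := hz
    obtain ⟨z₂, hz₂, -⟩ :=
      ((hconnDel e₁).2 w trivial q trivial).cases_head.resolve_left (fun h => hqw h.symm)
    obtain ⟨-, -, e₂, he₂mem, he₂⟩ := hz₂
    refine two_memE _ e₂ e₁ ⟨trivial, ?_⟩ ⟨trivial, ?_⟩ (fun h => he₂mem.2 h)
    · rw [he₂]; exact Sym2.mem_mk_left _ _
    · rw [he₁]; exact Sym2.mem_mk_left _ _
  -- τ is attained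
  have himne : (G.cost '' {F | G.TwoEdgeCover F}).Nonempty := ⟨_, Set.univ, hcovU, rfl⟩
  have htaumem : G.tau ∈ G.cost '' {F | G.TwoEdgeCover F} := Nat.sInf_mem himne
  obtain ⟨F₀, hF₀cov, hF₀cost⟩ := htaumem
  -- the potential
  set N := Nat.card G.E with hNdef
  set Φ : Set G.E → ℕ := fun X =>
    {p : G.V × G.V | ¬ G.Reachable Set.univ X p.1 p.2}.ncard * (N + 1) +
      {e | G.IsBridge X e}.ncard with hΦdef
  have hTne : {n | ∃ F, G.TwoEdgeCover F ∧ G.cost F = G.tau ∧ Φ F = n}.Nonempty :=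
    ⟨Φ F₀, F₀, hF₀cov, hF₀cost, rfl⟩
  obtain ⟨F, hcov, hcost, hΦF⟩ := Nat.sInf_mem hTne
  have hmin : ∀ F', G.TwoEdgeCover F' → G.cost F' = G.tau → Φ F ≤ Φ F' := by
    intro F' h1 h2
    rw [hΦF]
    exact Nat.sInf_le ⟨F', h1, h2, rfl⟩
  refine ⟨F, hcov, hcost, ?_⟩
  intro B hblock hpend hzb
  by_contra hlt
  push_neg at hlt
  obtain ⟨hcomp, hBcard⟩ := hblock
  obtain ⟨hBsub, hBne, hBconn, hBclosed⟩ := hcomp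
  obtain ⟨e0, he0br, ⟨u, hue, huB⟩, he0zero⟩ := hzb
  set I : Set G.E := {e ∈ F | ∀ x ∈ G.ends e, x ∈ B} with hIdef
  have hcostB : {e ∈ I | ¬ G.isZero e}.ncard ≤ 2 := by
    have h3 : G.cost I < 3 := hlt
    unfold CostGraph.cost at h3
    omega
  have hpendeq : {e | G.IsBridge F e ∧ ∃ x ∈ G.ends e, x ∈ B} = {e0} := by
    obtain ⟨a, ha⟩ := Set.ncard_eq_one.1 hpend
    have h1 : e0 ∈ {e | G.IsBridge F e ∧ ∃ x ∈ G.ends e, x ∈ B} := ⟨he0br, u, hue, huB⟩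
    rw [ha] at h1
    have h2 : e0 = a := h1
    rw [ha, show a = e0 from h2.symm]
  obtain ⟨v, hends0⟩ := Sym2.mem_iff_exists.1 hue
  have huv : u ≠ v := by
    intro h
    exact G.loopless e0 (by rw [hends0]; exact Sym2.mk_isDiag_iff.2 h)
  have he0F : e0 ∈ F := he0br.1
  have hue0 : u ∈ G.ends e0 := by rw [hends0]; exact Sym2.mem_mk_left _ _
  have hve0 : v ∈ G.ends e0 := by rw [hends0]; exact Sym2.mem_mk_right _ _
  -- fact (a): an edge of `F` incident to `B` is internal or the zero-bridge
  have hfactA : ∀ e ∈ F, ∀ w, w ∈ G.ends e → w ∈ B → e ∈ I ∨ e = e0 := by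
    intro e heF w hw hwB
    by_cases hbr : G.IsBridge F e
    · right
      have h1 : e ∈ {e | G.IsBridge F e ∧ ∃ x ∈ G.ends e, x ∈ B} := ⟨hbr, w, hw, hwB⟩
      rw [hpendeq] at h1
      exact h1
    · left
      obtain ⟨w', hw'⟩ := Sym2.mem_iff_exists.1 hw
      have hadj : G.Adj Set.univ (F \ {e' | G.IsBridge F e'}) w w' :=
        ⟨trivial, trivial, e, ⟨heF, hbr⟩, hw'⟩
      have hw'B : w' ∈ B := hBclosed w hwB w' trivial hadj
      refine ⟨heF, fun z hz => ?_⟩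
      rw [hw'] at hz
      rcases Sym2.mem_iff.1 hz with rfl | rfl
      · exact hwB
      · exact hw'B
  have hvB : v ∉ B := by
    intro hvB
    have h1 : G.Reachable B (F \ {e' | G.IsBridge F e'}) u v := hBconn.2 u huB v hvB
    refine he0br.2.2 u v hends0 (h1.mono (Set.subset_univ B) ?_)
    rintro e' ⟨h1', h2'⟩
    exact ⟨h1', fun he : e' = e0 => h2' (he ▸ he0br)⟩
  have he0I : e0 ∉ I := fun h => hvB (h.2 v hve0)
  have hdoor : ∀ e ∈ F, ∀ c d, G.ends e = s(c, d) → c ∈ B → d ∉ B → c = u ∧ d = v := by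
    intro e heF c d hcd hcB hdB
    rcases hfactA e heF c (by rw [hcd]; exact Sym2.mem_mk_left _ _) hcB with hI | rfl
    · exact absurd (hI.2 d (by rw [hcd]; exact Sym2.mem_mk_right _ _)) hdB
    · rw [hends0] at hcd
      rcases Sym2.eq_iff.1 hcd with ⟨h1, h2⟩ | ⟨h1, h2⟩
      · exact ⟨h1.symm, h2.symm⟩
      · exact absurd (show v ∈ B by rw [h2]; exact hcB) hvB
  -- internal edges are not bridges
  have hIbr : ∀ e ∈ I, ¬ G.IsBridge F e := by
    intro e heI hbr
    obtain ⟨c, d, hcd⟩ := ends_rep e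
    have hcB : c ∈ B := heI.2 c (by rw [hcd]; exact Sym2.mem_mk_left _ _)
    have h1 : e ∈ {e | G.IsBridge F e ∧ ∃ x ∈ G.ends e, x ∈ B} :=
      ⟨hbr, c, by rw [hcd]; exact Sym2.mem_mk_left _ _, hcB⟩
    rw [hpendeq] at h1
    exact he0I (h1 ▸ heI)
  -- the internal graph is connected, even after deleting one non-bridge
  have hIconn : ∀ p ∈ B, ∀ q ∈ B, G.Reachable B I p q := by
    intro p hp q hq
    have h1 : G.Reachable Set.univ F p q :=
      (hBconn.2 p hp q hq).mono (Set.subset_univ B) Set.diff_subset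
    exact (CostGraph.project_in hdoor h1 hp).1 hq
  have h2ECI : ∀ e', ¬ G.IsBridge F e' → ∀ p ∈ B, ∀ q ∈ B,
      G.Reachable B (I \ {e'}) p q := by
    intro e' hbr' p hp q hq
    have h1 : G.Reachable Set.univ (F \ {e'}) p q := by
      refine (hBconn.2 p hp q hq).lift ?_
      rintro a b ⟨-, -, e'', ⟨he''F, he''br⟩, hab⟩
      by_cases h : e'' = e'
      · subst h
        exact CostGraph.reach_of_not_isBridge he''F hbr' hab
      · exact Relation.ReflTransGen.single ⟨trivial, trivial, e'', ⟨he''F, h⟩, hab⟩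
    have hdoor' : ∀ e ∈ F \ {e'}, ∀ c d, G.ends e = s(c, d) → c ∈ B → d ∉ B →
        c = u ∧ d = v := fun e he => hdoor e he.1
    have h2 := (CostGraph.project_in hdoor' h1 hp).1 hq
    have hset : {e ∈ F \ {e'} | ∀ z ∈ G.ends e, z ∈ B} = I \ {e'} := by
      ext e
      constructor
      · rintro ⟨⟨h1', h2'⟩, h3'⟩; exact ⟨⟨h1', h3'⟩, h2'⟩
      · rintro ⟨⟨h1', h2'⟩, h3'⟩; exact ⟨⟨h1', h3'⟩, h2'⟩
    rwa [hset] at h2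
  -- two distinct internal edges at every node of B
  have hIdeg : ∀ w ∈ B, ∃ e₁ e₂, e₁ ∈ I ∧ e₂ ∈ I ∧ e₁ ≠ e₂ ∧
      w ∈ G.ends e₁ ∧ w ∈ G.ends e₂ := by
    intro w hw
    obtain ⟨a, ha, b, hb, hab⟩ := (Set.one_lt_ncard (Set.toFinite B)).1 hBcard
    have hq : ∃ q ∈ B, q ≠ w := by
      by_cases h : a = w
      · exact ⟨b, hb, fun hbw => hab (h.trans hbw.symm)⟩
      · exact ⟨a, ha, h⟩
    obtain ⟨q, hqB, hqw⟩ := hq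
    obtain ⟨z, hz, -⟩ := (hIconn w hw q hqB).cases_head.resolve_left (fun h => hqw h.symm)
    obtain ⟨-, -, e₁, he₁I, he₁⟩ := hz
    have hw1 : w ∈ G.ends e₁ := by rw [he₁]; exact Sym2.mem_mk_left _ _
    obtain ⟨z₂, hz₂, -⟩ :=
      (h2ECI e₁ (hIbr e₁ he₁I) w hw q hqB).cases_head.resolve_left (fun h => hqw h.symm)
    obtain ⟨-, -, e₂, he₂mem, he₂⟩ := hz₂
    refine ⟨e₂, e₁, he₂mem.1, he₁I, fun h => he₂mem.2 h, ?_, hw1⟩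
    rw [he₂]; exact Sym2.mem_mk_left _ _
  -- no internal zero-edge at u
  have hnoZeroU : ∀ e ∈ I, u ∈ G.ends e → ¬ G.isZero e := by
    intro e heI hu' hz
    have hne : e ≠ e0 := fun h => he0I (h ▸ heI)
    exact hmatch e e0 hz he0zero hne u hu' hue0
  obtain ⟨f₁, f₂, hf₁I, hf₂I, hf12, huf₁, huf₂⟩ := hIdeg u huB
  have hf₁unit := hnoZeroU f₁ hf₁I huf₁
  have hf₂unit := hnoZeroU f₂ hf₂I huf₂
  have hIU : {e ∈ I | ¬ G.isZero e} = {f₁, f₂} := by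
    refine (Set.eq_of_subset_of_ncard_le ?_ ?_ (Set.toFinite _)).symm
    · rintro e (rfl | rfl)
      exacts [⟨hf₁I, hf₁unit⟩, ⟨hf₂I, hf₂unit⟩]
    · rw [Set.ncard_pair hf12]
      exact hcostB
  -- every node of B other than u is joined to u by f₁ or f₂
  have hunit_at : ∀ w ∈ B, w ≠ u → ∃ f, (f = f₁ ∨ f = f₂) ∧ G.ends f = s(u, w) := by
    intro w hw hwu
    obtain ⟨e₁, e₂, he₁I, he₂I, hne, hw1, hw2⟩ := hIdeg w hw
    have hnz : ¬ (G.isZero e₁ ∧ G.isZero e₂) := by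
      rintro ⟨hz1, hz2⟩
      exact hmatch e₁ e₂ hz1 hz2 hne w hw1 hw2
    have hex : ∃ f, f ∈ I ∧ ¬ G.isZero f ∧ w ∈ G.ends f := by
      by_cases h1 : G.isZero e₁
      · exact ⟨e₂, he₂I, fun h2 => hnz ⟨h1, h2⟩, hw2⟩
      · exact ⟨e₁, he₁I, h1, hw1⟩
    obtain ⟨f, hfI, hfu, hwf⟩ := hex
    have hf12' : f = f₁ ∨ f = f₂ := by
      have h1 : f ∈ ({f₁, f₂} : Set G.E) := hIU ▸ (⟨hfI, hfu⟩ : f ∈ {e ∈ I | ¬ G.isZero e})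
      exact h1
    have huf : u ∈ G.ends f := by rcases hf12' with rfl | rfl; exacts [huf₁, huf₂]
    exact ⟨f, hf12', CostGraph.sym2_eq_of_mem huf hwf (fun h => hwu h.symm)⟩
  -- find the outgoing edge g = xy
  have hconn_u : G.ConnectedOn ({u}ᶜ) Set.univ := not_not.mp (hncut u)
  obtain ⟨a₀, ha₀, b₀, hb₀, hab₀⟩ := (Set.one_lt_ncard (Set.toFinite B)).1 hBcard
  have hx₀ : ∃ x₀ ∈ B, x₀ ≠ u := by
    by_cases h : a₀ = u
    · exact ⟨b₀, hb₀, fun hb => hab₀ (h.trans hb.symm)⟩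
    · exact ⟨a₀, ha₀, h⟩
  obtain ⟨x₀, hx₀B, hx₀u⟩ := hx₀
  have hreach0 : G.Reachable ({u}ᶜ) Set.univ x₀ v :=
    hconn_u.2 x₀ hx₀u v (fun h : v = u => huv h.symm)
  obtain ⟨x, hxT, y, hyT, hadj⟩ :=
    CostGraph.exists_crossing (T := B \ {u}) hreach0 ⟨hx₀B, hx₀u⟩ (fun h => hvB h.1)
  obtain ⟨hxU, hyU, g, -, hgends⟩ := hadj
  have hxB : x ∈ B := hxT.1
  have hxu : x ≠ u := hxT.2
  have hyu : y ≠ u := hyU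
  have hyB : y ∉ B := fun h => hyT ⟨h, hyu⟩
  have hxy : x ≠ y := by
    intro h
    exact G.loopless g (by rw [hgends]; exact Sym2.mk_isDiag_iff.2 h)
  have hxg : x ∈ G.ends g := by rw [hgends]; exact Sym2.mem_mk_left _ _
  have hyg : y ∈ G.ends g := by rw [hgends]; exact Sym2.mem_mk_right _ _
  have hgF : g ∉ F := by
    intro hgF
    rcases hfactA g hgF x hxg hxB with hI | rfl
    · exact hyB (hI.2 y hyg)
    · rw [hends0] at hgends
      rcases Sym2.eq_iff.1 hgends with ⟨h1, -⟩ | ⟨-, h2⟩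
      · exact hxu h1.symm
      · exact hvB (show v ∈ B by rw [h2]; exact hxB)
  -- the two unit edges fx, fxb at u
  obtain ⟨fx, hfx12, hfxends⟩ := hunit_at x hxB hxu
  have hfxI : fx ∈ I := by rcases hfx12 with rfl | rfl; exacts [hf₁I, hf₂I]
  have hfxunit : ¬ G.isZero fx := by rcases hfx12 with rfl | rfl; exacts [hf₁unit, hf₂unit]
  have hufx : u ∈ G.ends fx := by rw [hfxends]; exact Sym2.mem_mk_left _ _
  have hxfx : x ∈ G.ends fx := by rw [hfxends]; exact Sym2.mem_mk_right _ _
  set fxb := if fx = f₁ then f₂ else f₁ with hfxbdef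
  have hfxb12 : fxb = f₁ ∨ fxb = f₂ := by
    rw [hfxbdef]; split <;> [exact Or.inr rfl; exact Or.inl rfl]
  have hfxfxb : fx ≠ fxb := by
    rw [hfxbdef]
    split
    · next h => rw [h]; exact hf12
    · next h => exact h
  have hfxbI : fxb ∈ I := by
    rcases hfxb12 with h | h
    · rw [h]; exact hf₁I
    · rw [h]; exact hf₂I
  have hfxbunit : ¬ G.isZero fxb := by
    rcases hfxb12 with h | h
    · rw [h]; exact hf₁unit
    · rw [h]; exact hf₂unit
  have hufxb : u ∈ G.ends fxb := by
    rcases hfxb12 with h | h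
    · rw [h]; exact huf₁
    · rw [h]; exact huf₂
  have h12 : ∀ f, (f = f₁ ∨ f = f₂) → f = fx ∨ f = fxb := by
    intro f hf
    rw [hfxbdef]
    by_cases hcase : fx = f₁
    · rw [if_pos hcase]
      rcases hf with rfl | rfl
      · exact Or.inl hcase.symm
      · exact Or.inr rfl
    · rw [if_neg hcase]
      rcases hf with rfl | rfl
      · exact Or.inr rfl
      · rcases hfx12 with h | h
        · exact absurd h hcase
        · exact Or.inl h.symm
  obtain ⟨xb, hfxbends⟩ := Sym2.mem_iff_exists.1 hufxb
  have hxbu : xb ≠ u := by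
    intro h
    exact G.loopless fxb (by rw [hfxbends]; exact Sym2.mk_isDiag_iff.2 h.symm)
  have hxbB : xb ∈ B := hfxbI.2 xb (by rw [hfxbends]; exact Sym2.mem_mk_right _ _)
  have hxbfxb : xb ∈ G.ends fxb := by rw [hfxbends]; exact Sym2.mem_mk_right _ _
  -- every node of B other than u is x or xb
  have hBchar : ∀ w ∈ B, w ≠ u → w = x ∨ w = xb := by
    intro w hw hwu
    obtain ⟨f, hf12', hfends⟩ := hunit_at w hw hwu
    rcases h12 f hf12' with rfl | rfl
    · left
      have h1 := hfxends.symm.trans hfends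
      rcases Sym2.eq_iff.1 h1 with ⟨-, h2⟩ | ⟨-, h3⟩
      · exact h2.symm
      · exact absurd h3 hxu
    · right
      have h1 := hfxbends.symm.trans hfends
      rcases Sym2.eq_iff.1 h1 with ⟨-, h2⟩ | ⟨-, h3⟩
      · exact h2.symm
      · exact absurd h3 hxbu
  -- characterization of internal edges
  have hIchar : ∀ e ∈ I, e = fx ∨ e = fxb ∨
      (G.isZero e ∧ G.ends e = s(x, xb) ∧ x ≠ xb) := by
    intro e heI
    by_cases hz : G.isZero e
    · right; right
      obtain ⟨c, d, hcd⟩ := ends_rep e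
      have hcE : c ∈ G.ends e := by rw [hcd]; exact Sym2.mem_mk_left _ _
      have hdE : d ∈ G.ends e := by rw [hcd]; exact Sym2.mem_mk_right _ _
      have hcB : c ∈ B := heI.2 c hcE
      have hdB : d ∈ B := heI.2 d hdE
      have hcu : c ≠ u := fun h => hnoZeroU e heI (h ▸ hcE) hz
      have hdu : d ≠ u := fun h => hnoZeroU e heI (h ▸ hdE) hz
      have hcdne : c ≠ d := by
        intro h
        exact G.loopless e (by rw [hcd]; exact Sym2.mk_isDiag_iff.2 h)
      rcases hBchar c hcB hcu with rfl | rfl <;> rcases hBchar d hdB hdu with rfl | rfl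
      · exact absurd rfl hcdne
      · exact ⟨hz, hcd, hcdne⟩
      · exact ⟨hz, hcd.trans Sym2.eq_swap, hcdne.symm⟩
      · exact absurd rfl hcdne
    · have h1 : e ∈ ({f₁, f₂} : Set G.E) := hIU ▸ (⟨heI, hz⟩ : e ∈ {e ∈ I | ¬ G.isZero e})
      rcases h12 e h1 with h | h
      · exact Or.inl h
      · exact Or.inr (Or.inl h)
  -- the modified edge set
  set F' : Set G.E := insert g (F \ {fx}) with hF'def
  have hIF' : ∀ e ∈ I, e ≠ fx → e ∈ F' := fun e he h =>
    Set.mem_insert_iff.2 (Or.inr ⟨he.1, h⟩)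
  have he0fx : e0 ≠ fx := fun h => hfxunit (h ▸ he0zero)
  have he0F' : e0 ∈ F' := Set.mem_insert_iff.2 (Or.inr ⟨he0F, he0fx⟩)
  have hgF' : g ∈ F' := Set.mem_insert g _
  have hfxbF' : fxb ∈ F' := hIF' fxb hfxbI (fun h => hfxfxb h.symm)
  have hIreach : G.Reachable B (I \ {fx}) u x := h2ECI fx (hIbr fx hfxI) u huB x hxB
  -- the zero link between x and xb when they differ
  have hzlink : xb ≠ x → ∃ z, z ∈ I ∧ G.isZero z ∧ G.ends z = s(x, xb) := by
    intro hne
    obtain ⟨e₁, e₂, he₁I, he₂I, hne12, h1, h2⟩ := hIdeg xb hxbB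
    have hex : ∃ h', h' ∈ I ∧ h' ≠ fxb ∧ xb ∈ G.ends h' := by
      by_cases h : e₁ = fxb
      · exact ⟨e₂, he₂I, fun hh => hne12 (h.trans hh.symm), h2⟩
      · exact ⟨e₁, he₁I, h, h1⟩
    obtain ⟨h', hh'I, hh'ne, hxbh'⟩ := hex
    rcases hIchar h' hh'I with rfl | rfl | ⟨hz, hhe, -⟩
    · exfalso
      rw [hfxends] at hxbh'
      rcases Sym2.mem_iff.1 hxbh' with h | h
      · exact hxbu h
      · exact hne h
    · exact absurd rfl hh'ne
    · exact ⟨h', hh'I, hz, hhe⟩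
  -- lifting the internal path into F' minus an avoided edge
  have harc1 : ∀ eav : G.E, eav ∉ I → G.Reachable Set.univ (F' \ {eav}) u x := by
    intro eav h
    refine hIreach.mono (Set.subset_univ B) ?_
    rintro e ⟨heI, hefx⟩
    exact ⟨hIF' e heI hefx, fun hh : e = eav => h (hh ▸ heI)⟩
  -- coverage: every F-step is realizable in F'
  have hcovF' : ∀ a b, G.Adj Set.univ F a b → G.Reachable Set.univ F' a b := by
    rintro a b ⟨-, -, e, heF, hab⟩
    by_cases h : e = fx
    · subst h
      have hux := hfxends.symm.trans hab
      have hr : G.Reachable Set.univ F' u x := by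
        refine hIreach.mono (Set.subset_univ B) ?_
        rintro e' ⟨he'I, he'fx⟩
        exact hIF' e' he'I he'fx
      rcases Sym2.eq_iff.1 hux with ⟨rfl, rfl⟩ | ⟨rfl, rfl⟩
      · exact hr
      · exact hr.symm'
    · exact Relation.ReflTransGen.single
        ⟨trivial, trivial, e, Set.mem_insert_iff.2 (Or.inr ⟨heF, h⟩), hab⟩
  have hreachF'ofF : ∀ p q, G.Reachable Set.univ F p q → G.Reachable Set.univ F' p q :=
    fun p q h => h.lift hcovF'
  -- F' is a 2-edge cover
  have hcov' : G.TwoEdgeCover F' := by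
    intro w
    by_cases hwu : w = u
    · subst hwu
      exact two_memE _ e0 fxb ⟨he0F', hue0⟩ ⟨hfxbF', hufxb⟩
        (fun h => hfxbunit (h ▸ he0zero))
    · by_cases hwx : w = x
      · subst hwx
        obtain ⟨e₁, e₂, he₁I, he₂I, hne, h1, h2⟩ := hIdeg w hxB
        have hex : ∃ h', h' ∈ I ∧ h' ≠ fx ∧ w ∈ G.ends h' := by
          by_cases h : e₁ = fx
          · exact ⟨e₂, he₂I, fun hh => hne (h.trans hh.symm), h2⟩
          · exact ⟨e₁, he₁I, h, h1⟩
        obtain ⟨h', hh'I, hh'fx, hxh'⟩ := hex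
        exact two_memE _ g h' ⟨hgF', hxg⟩ ⟨hIF' h' hh'I hh'fx, hxh'⟩
          (fun h => hgF (h ▸ hh'I.1))
      · have hsub : {e ∈ F | w ∈ G.ends e} ⊆ {e ∈ F' | w ∈ G.ends e} := by
          rintro e ⟨heF, hwe⟩
          refine ⟨Set.mem_insert_iff.2 (Or.inr ⟨heF, fun h : e = fx => ?_⟩), hwe⟩
          rw [h, hfxends] at hwe
          rcases Sym2.mem_iff.1 hwe with h' | h'
          · exact hwu h'
          · exact hwx h'
        exact le_trans (hcov w) (Set.ncard_le_ncard hsub (Set.toFinite _))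
  -- F' has the same (minimum) cost
  have htau_le : G.tau ≤ G.cost F' := Nat.sInf_le ⟨F', hcov', rfl⟩
  have hcost_le : G.cost F' ≤ G.cost F := by
    have hsub : {e ∈ F' | ¬ G.isZero e} ⊆ insert g ({e ∈ F | ¬ G.isZero e} \ {fx}) := by
      rintro e ⟨heF', hz⟩
      rcases Set.mem_insert_iff.1 heF' with rfl | ⟨heF, hne⟩
      · exact Set.mem_insert _ _
      · exact Set.mem_insert_iff.2 (Or.inr ⟨⟨heF, hz⟩, hne⟩)
    calc G.cost F' ≤ (insert g ({e ∈ F | ¬ G.isZero e} \ {fx})).ncard :=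
          Set.ncard_le_ncard hsub (Set.toFinite _)
      _ ≤ ({e ∈ F | ¬ G.isZero e} \ {fx}).ncard + 1 := Set.ncard_insert_le _ _
      _ = {e ∈ F | ¬ G.isZero e}.ncard :=
          Set.ncard_diff_singleton_add_one ⟨hfxI.1, hfxunit⟩ (Set.toFinite _)
      _ = G.cost F := rfl
  have hcost' : G.cost F' = G.tau := le_antisymm (by rw [← hcost]; exact hcost_le) htau_le
  -- the potential strictly decreases
  have hΦlt : Φ F' < Φ F := by
    simp only [hΦdef]
    have hunrsub : {p : G.V × G.V | ¬ G.Reachable Set.univ F' p.1 p.2} ⊆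
        {p : G.V × G.V | ¬ G.Reachable Set.univ F p.1 p.2} :=
      fun p h hF => h (hreachF'ofF p.1 p.2 hF)
    have hbrle : {e | G.IsBridge F' e}.ncard ≤ N := by
      calc {e | G.IsBridge F' e}.ncard ≤ (Set.univ : Set G.E).ncard :=
            Set.ncard_le_ncard (Set.subset_univ _) (Set.toFinite _)
        _ = N := Set.ncard_univ _
    by_cases hyreach : G.Reachable Set.univ F y u
    · -- same component: the zero-bridge e0 stops being a bridge
      have houtv : G.Reachable Bᶜ {e ∈ F | ∀ z ∈ G.ends e, z ∉ B} y v :=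
        (CostGraph.project_out hdoor hyreach hyB).2 huB
      have houtlift : ∀ eav : G.E, eav ∉ {e ∈ F | ∀ z ∈ G.ends e, z ∉ B} →
          G.Reachable Set.univ (F' \ {eav}) y v := by
        intro eav heav
        refine houtv.mono (Set.subset_univ _) ?_
        rintro e ⟨heF, hout⟩
        refine ⟨Set.mem_insert_iff.2 (Or.inr ⟨heF, fun h : e = fx => ?_⟩),
          fun h : e = eav => heav (h ▸ ⟨heF, hout⟩)⟩
        exact hout u (h ▸ hufx) huB
      have hnotoutI : ∀ e ∈ I, e ∉ {e ∈ F | ∀ z ∈ G.ends e, z ∉ B} := by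
        rintro e heI ⟨-, hout⟩
        obtain ⟨c, d, hcd⟩ := ends_rep e
        have hcE : c ∈ G.ends e := by rw [hcd]; exact Sym2.mem_mk_left _ _
        exact hout c hcE (heI.2 c hcE)
      have hnotoute0 : e0 ∉ {e ∈ F | ∀ z ∈ G.ends e, z ∉ B} :=
        fun h => h.2 u hue0 huB
      have hnotoutg : g ∉ {e ∈ F | ∀ z ∈ G.ends e, z ∉ B} := fun h => hgF h.1
      have harc2 : ∀ eav : G.E, eav ≠ g → G.Adj Set.univ (F' \ {eav}) x y :=
        fun eav h => ⟨trivial, trivial, g, ⟨hgF', fun hh : g = eav => h hh.symm⟩, hgends⟩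
      have harc4 : ∀ eav : G.E, eav ≠ e0 → G.Adj Set.univ (F' \ {eav}) u v :=
        fun eav h => ⟨trivial, trivial, e0, ⟨he0F', fun hh : e0 = eav => h hh.symm⟩, hends0⟩
      have hge0 : e0 ≠ g := fun h => hgF (h ▸ he0F)
      -- e0 is not a bridge of F'
      have hreach_uv : G.Reachable Set.univ (F' \ {e0}) u v :=
        ((harc1 e0 he0I).tail (harc2 e0 hge0)).trans (houtlift e0 hnotoute0)
      have hnb0 : ¬ G.IsBridge F' e0 := CostGraph.not_isBridge_of_reach hends0 hreach_uv
      -- every bridge of F' is a bridge of F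
      have hbsub : {e | G.IsBridge F' e} ⊆ {e | G.IsBridge F e} := by
        intro e hbe
        by_contra hnbe
        have heF' : e ∈ F' := hbe.1
        apply absurd hbe
        by_cases h1 : e = e0
        · rw [h1]; exact hnb0
        by_cases h2 : e = g
        · rw [h2]
          refine CostGraph.not_isBridge_of_reach hgends ?_
          have hxu' : G.Reachable Set.univ (F' \ {g}) x u :=
            (harc1 g (fun h => hgF h.1)).symm'
          have huy : G.Reachable Set.univ (F' \ {g}) u y :=
            (Relation.ReflTransGen.single (harc4 g hge0.symm)).trans
              ((houtlift g hnotoutg).symm')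
          exact hxu'.trans huy
        by_cases h3 : e = fxb
        · rw [h3]
          refine CostGraph.not_isBridge_of_reach hfxbends ?_
          have hfxbe0 : fxb ≠ e0 := fun h => hfxbunit (h ▸ he0zero)
          have hfxbg : fxb ≠ g := fun h => hgF (h ▸ hfxbI.1)
          have huvv : G.Reachable Set.univ (F' \ {fxb}) u v :=
            Relation.ReflTransGen.single (harc4 fxb hfxbe0)
          have hvy : G.Reachable Set.univ (F' \ {fxb}) v y :=
            (houtlift fxb (hnotoutI fxb hfxbI)).symm'
          have hyx : G.Reachable Set.univ (F' \ {fxb}) y x :=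
            CostGraph.Reachable.symm' (Relation.ReflTransGen.single (harc2 fxb hfxbg))
          have hxxb : G.Reachable Set.univ (F' \ {fxb}) x xb := by
            by_cases hxx : xb = x
            · rw [hxx]
              exact Relation.ReflTransGen.refl
            · obtain ⟨z, hzI, hzz, hzends⟩ := hzlink hxx
              have hzfx : z ≠ fx := fun h => hfxunit (h ▸ hzz)
              have hzfxb : z ≠ fxb := fun h => hfxbunit (h ▸ hzz)
              exact Relation.ReflTransGen.single
                ⟨trivial, trivial, z, ⟨hIF' z hzI hzfx, hzfxb⟩, hzends⟩
          exact ((huvv.trans hvy).trans hyx).trans hxxb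
        by_cases h4 : e ∈ I ∧ G.isZero e
        · obtain ⟨heI, hez⟩ := h4
          rcases hIchar e heI with h' | h' | ⟨-, hee, hxxb⟩
          · exact absurd (h' ▸ hez) hfxunit
          · exact absurd h' h3
          · refine CostGraph.not_isBridge_of_reach hee ?_
            have hefx : e ≠ fx := fun h => hfxunit (h ▸ hez)
            have hefxb : e ≠ fxb := fun h => hfxbunit (h ▸ hez)
            have hxy' : G.Reachable Set.univ (F' \ {e}) x y :=
              Relation.ReflTransGen.single (harc2 e h2)
            have hyv : G.Reachable Set.univ (F' \ {e}) y v :=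
              houtlift e (hnotoutI e heI)
            have hvu : G.Reachable Set.univ (F' \ {e}) v u :=
              CostGraph.Reachable.symm' (Relation.ReflTransGen.single (harc4 e h1))
            have huxb : G.Reachable Set.univ (F' \ {e}) u xb :=
              Relation.ReflTransGen.single
                ⟨trivial, trivial, fxb, ⟨hfxbF', fun hh : fxb = e => hefxb hh.symm⟩, hfxbends⟩
            exact ((hxy'.trans hyv).trans hvu).trans huxb
        -- generic edge
        · have hefx : e ≠ fx := by
            intro h
            subst h
            rcases Set.mem_insert_iff.1 heF' with h' | h'
            · exact hgF (h' ▸ hfxI.1)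
            · exact h'.2 rfl
          have heI' : e ∉ I := by
            intro heI
            rcases hIchar e heI with h' | h' | ⟨hz', -, -⟩
            · exact hefx h'
            · exact h3 h'
            · exact h4 ⟨heI, hz'⟩
          have heF : e ∈ F := by
            rcases Set.mem_insert_iff.1 heF' with h' | h'
            · exact absurd h' h2
            · exact h'.1
          obtain ⟨c, d, hcd⟩ := ends_rep e
          have hr := CostGraph.reach_of_not_isBridge heF hnbe hcd
          refine CostGraph.not_isBridge_of_reach hcd (hr.lift ?_)
          rintro a b ⟨-, -, e'', ⟨he''F, he''ne⟩, hab⟩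
          by_cases h : e'' = fx
          · subst h
            have hux := hfxends.symm.trans hab
            have hr1 : G.Reachable Set.univ (F' \ {e}) u x := harc1 e heI'
            rcases Sym2.eq_iff.1 hux with ⟨rfl, rfl⟩ | ⟨rfl, rfl⟩
            · exact hr1
            · exact hr1.symm'
          · exact Relation.ReflTransGen.single
              ⟨trivial, trivial, e'',
                ⟨Set.mem_insert_iff.2 (Or.inr ⟨he''F, h⟩), he''ne⟩, hab⟩
      have hbss : {e | G.IsBridge F' e} ⊂ {e | G.IsBridge F e} :=
        (Set.ssubset_iff_of_subset hbsub).2 ⟨e0, he0br, hnb0⟩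
      have hblt : {e | G.IsBridge F' e}.ncard < {e | G.IsBridge F e}.ncard :=
        Set.ncard_lt_ncard hbss (Set.toFinite _)
      have hPle : {p : G.V × G.V | ¬ G.Reachable Set.univ F' p.1 p.2}.ncard ≤
          {p : G.V × G.V | ¬ G.Reachable Set.univ F p.1 p.2}.ncard :=
        Set.ncard_le_ncard hunrsub (Set.toFinite _)
      exact Nat.add_lt_add_of_le_of_lt (Nat.mul_le_mul_right _ hPle) hblt
    · -- different components: a new pair becomes reachable
      have hreachF'yu : G.Reachable Set.univ F' y u := by
        refine Relation.ReflTransGen.head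
          ⟨trivial, trivial, g, hgF', hgends.trans Sym2.eq_swap⟩ ?_
        refine (hIreach.mono (Set.subset_univ B) ?_).symm'
        rintro e' ⟨he'I, he'fx⟩
        exact hIF' e' he'I he'fx
      have hssub : {p : G.V × G.V | ¬ G.Reachable Set.univ F' p.1 p.2} ⊂
          {p : G.V × G.V | ¬ G.Reachable Set.univ F p.1 p.2} := by
        refine (Set.ssubset_iff_of_subset hunrsub).2 ⟨(y, u), hyreach, ?_⟩
        intro h
        exact h hreachF'yu
      have hP : {p : G.V × G.V | ¬ G.Reachable Set.univ F' p.1 p.2}.ncard <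
          {p : G.V × G.V | ¬ G.Reachable Set.univ F p.1 p.2}.ncard :=
        Set.ncard_lt_ncard hssub (Set.toFinite _)
      have key : {p : G.V × G.V | ¬ G.Reachable Set.univ F' p.1 p.2}.ncard * (N+1) +
          {e | G.IsBridge F' e}.ncard <
          {p : G.V × G.V | ¬ G.Reachable Set.univ F p.1 p.2}.ncard * (N+1) +
          {e | G.IsBridge F e}.ncard := by
        nlinarith [hP, hbrle]
      exact key
  exact absurd (hmin F' hcov' hcost') (not_le.2 hΦlt)
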